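/- arXiv:2401.07880 — 2 statements merged into one kernel-verified Lean document; each statement's English description precedes it below -/
import Mathlib

section
/- Let d, Nα, Nβ ≥ 1, N = Nα + Nβ, let η > 0 and set rα := −(1/(2η))e_1 and rβ := (1/(2η))e_1, where e_1 is the first standard basis vector of ℝ^d. Define V_ee(z_1,…,z_N) := Σ_{1≤i<j≤N} 1/|z_i − z_j| (with value +∞ when z_i = z_j) and V^η(x_1,…,x_{Nα}, y_1,…,y_{Nβ}) := Σ_{i=1}^{Nα} Σ_{j=1}^{Nβ} η/√(1 − 2η(x_i¹ − y_j¹) + η²|x_i − y_j|²) + Σ_{1≤i<j≤Nα} 1/|x_i − x_j| + Σ_{1≤i<j≤Nβ} 1/|y_i − y_j|, where x¹ denotes the first coordinate of x ∈ ℝ^d. Then for every Borel probability measure γα on (ℝ^d)^{Nα} and every Borel probability measure γβ on (ℝ^d)^{Nβ}, ∫ V_ee d((τ_{rα})_#γα ⊗ (τ_{rβ})_#γβ)_sym = ∫ V^η d(γα ⊗ γβ). In particular, for probability measures ρα, ρβ on ℝ^d, the infimum of ∫ V_ee dγ over all γ = ((τ_{rα})_#γα ⊗ (τ_{rβ})_#γβ)_sym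 with γα ∈ Π_{Nα}(ρα), γβ ∈ Π_{Nβ}(ρβ) equals the infimum of ∫ V^η d(γα ⊗ γβ) over γα ∈ Π_{Nα}(ρα), γβ ∈ Π_{Nβ}(ρβ). -/
open MeasureTheory

noncomputable section

/-- Symmetrization of a measure on `(ℝ^d)^N`: `(1/N!) ∑_{σ ∈ S_N} σ_# γ`, where a permutation
`σ` acts on `(ℝ^d)^N` by permuting the `N` blocks. -/
def symN {d N : ℕ} (γ : Measure (Fin N → EuclideanSpace ℝ (Fin d))) :
    Measure (Fin N → EuclideanSpace ℝ (Fin d)) :=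
  ((N.factorial : ENNReal))⁻¹ •
    ∑ σ : Equiv.Perm (Fin N), Measure.map (fun z => z ∘ σ) γ

/-- The Coulomb interaction `∑_{1 ≤ i < j ≤ N} 1/|z_i - z_j|`, with value `+∞` on diagonals. -/
def Vee {d N : ℕ} (z : Fin N → EuclideanSpace ℝ (Fin d)) : ENNReal :=
  ∑ i : Fin N, ∑ j : Fin N, if i < j then (ENNReal.ofReal ‖z i - z j‖)⁻¹ else 0

/-- The interaction energy in center-of-molecule coordinates. -/
def Veta {d Nα Nβ : ℕ} (hd : 0 < d) (η : ℝ)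
    (x : Fin Nα → EuclideanSpace ℝ (Fin d)) (y : Fin Nβ → EuclideanSpace ℝ (Fin d)) : ENNReal :=
  (∑ i : Fin Nα, ∑ j : Fin Nβ,
      ENNReal.ofReal η /
        ENNReal.ofReal (Real.sqrt
          (1 - 2 * η * (x i ⟨0, hd⟩ - y j ⟨0, hd⟩) + η ^ 2 * ‖x i - y j‖ ^ 2))) +
    (∑ i : Fin Nα, ∑ j : Fin Nα, if i < j then (ENNReal.ofReal ‖x i - x j‖)⁻¹ else 0) +
    (∑ i : Fin Nβ, ∑ j : Fin Nβ, if i < j then (ENNReal.ofReal ‖y i - y j‖)⁻¹ else 0)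

/-- The map sending a configuration of the two separated molecules to the corresponding
configuration of the total system: translate by `rα`, `rβ` and concatenate. -/
def couple {d Nα Nβ : ℕ} (rα rβ : EuclideanSpace ℝ (Fin d))
    (p : (Fin Nα → EuclideanSpace ℝ (Fin d)) × (Fin Nβ → EuclideanSpace ℝ (Fin d))) :
    Fin (Nα + Nβ) → EuclideanSpace ℝ (Fin d) :=
  Fin.append (fun i => p.1 i + rα) (fun j => p.2 j + rβ)

lemma vee_meas {d N : ℕ} : Measurable (Vee (d := d) (N := N)) := by
  unfold Vee
  refine Finset.measurable_sum _ fun i _ => Finset.measurable_sum _ fun j _ => ?_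
  split
  · exact (((measurable_pi_apply i).sub (measurable_pi_apply j)).norm.ennreal_ofReal).inv
  · exact measurable_const

lemma two_mul_vee {d N : ℕ} (w : Fin N → EuclideanSpace ℝ (Fin d)) :
    2 * Vee w = ∑ i : Fin N, ∑ j : Fin N, if i ≠ j then (ENNReal.ofReal ‖w i - w j‖)⁻¹ else 0 := by
  have h2 : (2 : ENNReal) * Vee w = Vee w + Vee w := by ring
  have hswap : (∑ i : Fin N, ∑ j : Fin N, if i < j then (ENNReal.ofReal ‖w i - w j‖)⁻¹ else 0)
      = ∑ i : Fin N, ∑ j : Fin N, if j < i then (ENNReal.ofReal ‖w i - w j‖)⁻¹ else 0 := by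
    rw [Finset.sum_comm]
    refine Finset.sum_congr rfl fun i _ => Finset.sum_congr rfl fun j _ => ?_
    rw [norm_sub_rev]
  have e1 : Vee w = ∑ i : Fin N, ∑ j : Fin N,
      if i < j then (ENNReal.ofReal ‖w i - w j‖)⁻¹ else 0 := rfl
  rw [h2, e1]
  nth_rewrite 2 [hswap]
  rw [← Finset.sum_add_distrib]
  refine Finset.sum_congr rfl fun i _ => ?_
  rw [← Finset.sum_add_distrib]
  refine Finset.sum_congr rfl fun j _ => ?_
  rcases lt_trichotomy i j with h | h | h
  · rw [if_pos h, if_neg (asymm h), if_pos h.ne, add_zero]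
  · subst h; simp
  · rw [if_neg (asymm h), if_pos h, if_pos h.ne', zero_add]

lemma vee_comp_perm {d N : ℕ} (σ : Equiv.Perm (Fin N)) (z : Fin N → EuclideanSpace ℝ (Fin d)) :
    Vee (z ∘ σ) = Vee z := by
  refine (ENNReal.mul_right_inj (a := 2) (by norm_num) (by norm_num)).1 ?_
  rw [two_mul_vee, two_mul_vee]
  refine Fintype.sum_equiv σ _ _ fun i => ?_
  refine Fintype.sum_equiv σ _ _ fun j => ?_
  simp only [Function.comp_apply]
  congr 1
  simp [σ.injective.ne_iff]

lemma lintegral_symN {d N : ℕ} (γ : Measure (Fin N → EuclideanSpace ℝ (Fin d))) :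
    (∫⁻ z, Vee z ∂(((N.factorial : ENNReal))⁻¹ •
      ∑ σ : Equiv.Perm (Fin N), Measure.map (fun z => z ∘ σ) γ)) = ∫⁻ z, Vee z ∂γ := by
  rw [lintegral_smul_measure, lintegral_finset_sum_measure]
  have : ∀ σ : Equiv.Perm (Fin N),
      (∫⁻ z, Vee z ∂(Measure.map (fun z => z ∘ σ) γ)) = ∫⁻ z, Vee z ∂γ := by
    intro σ
    rw [lintegral_map vee_meas (measurable_pi_lambda _ fun i => measurable_pi_apply (σ i))]
    exact lintegral_congr fun z => vee_comp_perm σ z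
  rw [Finset.sum_congr rfl fun σ _ => this σ, Finset.sum_const, Finset.card_univ,
    Fintype.card_perm, Fintype.card_fin, nsmul_eq_mul, smul_eq_mul, ← mul_assoc,
    ENNReal.inv_mul_cancel (by exact_mod_cast Nat.factorial_ne_zero N) (by simp), one_mul]

lemma couple_meas {d Nα Nβ : ℕ} (rα rβ : EuclideanSpace ℝ (Fin d)) :
    Measurable (couple (Nα := Nα) (Nβ := Nβ) rα rβ) := by
  unfold couple
  refine measurable_pi_lambda _ fun k => ?_
  induction k using Fin.addCases with
  | left i =>
    simp only [Fin.append_left]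
    have h1 : Measurable fun p : (Fin Nα → EuclideanSpace ℝ (Fin d)) ×
        (Fin Nβ → EuclideanSpace ℝ (Fin d)) => p.1 i := (measurable_pi_apply i).comp measurable_fst
    exact h1.add_const rα
  | right j =>
    simp only [Fin.append_right]
    have h2 : Measurable fun p : (Fin Nα → EuclideanSpace ℝ (Fin d)) ×
        (Fin Nβ → EuclideanSpace ℝ (Fin d)) => p.2 j := (measurable_pi_apply j).comp measurable_snd
    exact h2.add_const rβ

lemma vee_couple {d Nα Nβ : ℕ} (hd : 0 < d) (η : ℝ) (hη : 0 < η)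
    (rα rβ : EuclideanSpace ℝ (Fin d))
    (hrα : rα = (-(1 / (2 * η))) • EuclideanSpace.single (⟨0, hd⟩ : Fin d) (1 : ℝ))
    (hrβ : rβ = (1 / (2 * η)) • EuclideanSpace.single (⟨0, hd⟩ : Fin d) (1 : ℝ))
    (p : (Fin Nα → EuclideanSpace ℝ (Fin d)) × (Fin Nβ → EuclideanSpace ℝ (Fin d))) :
    Vee (couple rα rβ p) = Veta hd η p.1 p.2 := by
  obtain ⟨x, y⟩ := p
  have hcross : ∀ (a b : EuclideanSpace ℝ (Fin d)),
      (ENNReal.ofReal ‖a + rα - (b + rβ)‖)⁻¹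
        = ENNReal.ofReal η /
          ENNReal.ofReal (Real.sqrt
            (1 - 2 * η * (a ⟨0, hd⟩ - b ⟨0, hd⟩) + η ^ 2 * ‖a - b‖ ^ 2)) := by
    intro a b
    subst hrα hrβ
    set e : EuclideanSpace ℝ (Fin d) := EuclideanSpace.single (⟨0, hd⟩ : Fin d) (1 : ℝ) with he
    set u : EuclideanSpace ℝ (Fin d) := a - b with hu
    have hw : a + (-(1 / (2 * η))) • e - (b + (1 / (2 * η)) • e) = u - (1 / η) • e := by
      have : (1 / η : ℝ) = 1 / (2 * η) + 1 / (2 * η) := by field_simp; ring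
      rw [this, add_smul, hu]
      module
    rw [hw]
    have hnorm2 : ‖u - (1 / η) • e‖ ^ 2 = ‖u‖ ^ 2 - 2 * (1 / η) * u ⟨0, hd⟩ + (1 / η) ^ 2 := by
      rw [norm_sub_sq_real, real_inner_smul_right, norm_smul, mul_pow]
      have h1 : (inner ℝ u e : ℝ) = u ⟨0, hd⟩ := by
        rw [he, EuclideanSpace.inner_single_right]; simp
      rw [h1, he, EuclideanSpace.norm_single]
      simp [abs_of_pos (by positivity : (0:ℝ) < 1/η)]
      ring
    have hu0 : u ⟨0, hd⟩ = a ⟨0, hd⟩ - b ⟨0, hd⟩ := by rw [hu]; exact PiLp.sub_apply _ a b _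
    have harg : 1 - 2 * η * (a ⟨0, hd⟩ - b ⟨0, hd⟩) + η ^ 2 * ‖a - b‖ ^ 2
        = (η * ‖u - (1 / η) • e‖) ^ 2 := by
      rw [mul_pow, hnorm2, ← hu0, ← hu]
      field_simp
      ring
    rw [harg, Real.sqrt_sq (by positivity), ENNReal.ofReal_mul hη.le, ENNReal.div_eq_inv_mul,
      ENNReal.mul_inv (Or.inl (by simpa using hη)) (Or.inl ENNReal.ofReal_ne_top),
      mul_comm (ENNReal.ofReal η)⁻¹, mul_assoc,
      ENNReal.inv_mul_cancel (by simpa using hη) ENNReal.ofReal_ne_top, mul_one]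
  unfold Vee couple Veta
  rw [Fin.sum_univ_add]
  simp only [Fin.sum_univ_add, Fin.append_left, Fin.append_right]
  have c1 : ∀ i j : Fin Nα, Fin.castAdd Nβ i < Fin.castAdd Nβ j ↔ i < j := by
    intro i j; simp only [Fin.lt_def, Fin.coe_castAdd]
  have c2 : ∀ (i : Fin Nα) (j : Fin Nβ), Fin.castAdd Nβ i < Fin.natAdd Nα j := by
    intro i j; simp only [Fin.lt_def, Fin.coe_castAdd, Fin.coe_natAdd]
    exact lt_of_lt_of_le i.isLt (Nat.le_add_right _ _)
  have c3 : ∀ (i : Fin Nβ) (j : Fin Nα), ¬ Fin.natAdd Nα i < Fin.castAdd Nβ j := by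
    intro i j; simp only [Fin.lt_def, Fin.coe_castAdd, Fin.coe_natAdd, not_lt]
    exact le_trans j.isLt.le (Nat.le_add_right _ _)
  have c4 : ∀ i j : Fin Nβ, Fin.natAdd Nα i < Fin.natAdd Nα j ↔ i < j := by
    intro i j; simp only [Fin.lt_def, Fin.coe_natAdd]; omega
  calc (∑ i : Fin Nα, ((∑ j : Fin Nα, if Fin.castAdd Nβ i < Fin.castAdd Nβ j then
            (ENNReal.ofReal ‖x i + rα - (x j + rα)‖)⁻¹ else 0) +
          ∑ j : Fin Nβ, if Fin.castAdd Nβ i < Fin.natAdd Nα j then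
            (ENNReal.ofReal ‖x i + rα - (y j + rβ)‖)⁻¹ else 0)) +
        (∑ i : Fin Nβ, ((∑ j : Fin Nα, if Fin.natAdd Nα i < Fin.castAdd Nβ j then
            (ENNReal.ofReal ‖y i + rβ - (x j + rα)‖)⁻¹ else 0) +
          ∑ j : Fin Nβ, if Fin.natAdd Nα i < Fin.natAdd Nα j then
            (ENNReal.ofReal ‖y i + rβ - (y j + rβ)‖)⁻¹ else 0))
      = (∑ i : Fin Nα, ((∑ j : Fin Nα, if i < j then (ENNReal.ofReal ‖x i - x j‖)⁻¹ else 0) +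
          ∑ j : Fin Nβ, ENNReal.ofReal η /
            ENNReal.ofReal (Real.sqrt
              (1 - 2 * η * (x i ⟨0, hd⟩ - y j ⟨0, hd⟩) + η ^ 2 * ‖x i - y j‖ ^ 2)))) +
        (∑ i : Fin Nβ, ((0 : ENNReal) +
          ∑ j : Fin Nβ, if i < j then (ENNReal.ofReal ‖y i - y j‖)⁻¹ else 0)) := by
        congr 1
        · refine Finset.sum_congr rfl fun i _ => ?_
          congr 1
          · refine Finset.sum_congr rfl fun j _ => ?_
            rw [add_sub_add_right_eq_sub]
            simp only [c1]
          · refine Finset.sum_congr rfl fun j _ => ?_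
            rw [if_pos (c2 i j), hcross]
        · refine Finset.sum_congr rfl fun i _ => ?_
          congr 1
          · exact Finset.sum_eq_zero fun j _ => if_neg (c3 i j)
          · refine Finset.sum_congr rfl fun j _ => ?_
            rw [add_sub_add_right_eq_sub]
            simp only [c4]
    _ = _ := by
        simp only [zero_add, Finset.sum_add_distrib]
        ring

theorem stmt_2 {d Nα Nβ : ℕ} (hd : 0 < d) (hNα : 0 < Nα) (hNβ : 0 < Nβ)
    (η : ℝ) (hη : 0 < η)
    (rα rβ : EuclideanSpace ℝ (Fin d))
    (hrα : rα = (-(1 / (2 * η))) • EuclideanSpace.single (⟨0, hd⟩ : Fin d) (1 : ℝ))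
    (hrβ : rβ = (1 / (2 * η)) • EuclideanSpace.single (⟨0, hd⟩ : Fin d) (1 : ℝ))
    (ρα ρβ : Measure (EuclideanSpace ℝ (Fin d)))
    [IsProbabilityMeasure ρα] [IsProbabilityMeasure ρβ] :
    (∀ (γα : Measure (Fin Nα → EuclideanSpace ℝ (Fin d)))
        (γβ : Measure (Fin Nβ → EuclideanSpace ℝ (Fin d))),
        IsProbabilityMeasure γα → IsProbabilityMeasure γβ →
        ∫⁻ z, Vee z ∂(symN (Measure.map (couple rα rβ) (γα.prod γβ))) =
          ∫⁻ q, Veta hd η q.1 q.2 ∂(γα.prod γβ)) ∧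
    (⨅ q : {q : Measure (Fin Nα → EuclideanSpace ℝ (Fin d)) ×
              Measure (Fin Nβ → EuclideanSpace ℝ (Fin d)) //
            IsProbabilityMeasure q.1 ∧ IsProbabilityMeasure q.2 ∧
            (∀ i : Fin Nα, Measure.map (fun z => z i) q.1 = ρα) ∧
            (∀ j : Fin Nβ, Measure.map (fun z => z j) q.2 = ρβ)},
        ∫⁻ z, Vee z ∂(symN (Measure.map (couple rα rβ) (q.val.1.prod q.val.2)))) =
      ⨅ q : {q : Measure (Fin Nα → EuclideanSpace ℝ (Fin d)) ×
              Measure (Fin Nβ → EuclideanSpace ℝ (Fin d)) //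
            IsProbabilityMeasure q.1 ∧ IsProbabilityMeasure q.2 ∧
            (∀ i : Fin Nα, Measure.map (fun z => z i) q.1 = ρα) ∧
            (∀ j : Fin Nβ, Measure.map (fun z => z j) q.2 = ρβ)},
        ∫⁻ w, Veta hd η w.1 w.2 ∂(q.val.1.prod q.val.2) := by
  have part1 : ∀ (γα : Measure (Fin Nα → EuclideanSpace ℝ (Fin d)))
      (γβ : Measure (Fin Nβ → EuclideanSpace ℝ (Fin d))),
      IsProbabilityMeasure γα → IsProbabilityMeasure γβ →
      ∫⁻ z, Vee z ∂(symN (Measure.map (couple rα rβ) (γα.prod γβ))) =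
        ∫⁻ q, Veta hd η q.1 q.2 ∂(γα.prod γβ) := by
    intro γα γβ _ _
    rw [show symN (Measure.map (couple rα rβ) (γα.prod γβ)) =
        (((Nα + Nβ).factorial : ENNReal))⁻¹ •
          ∑ σ : Equiv.Perm (Fin (Nα + Nβ)),
            Measure.map (fun z => z ∘ σ) (Measure.map (couple rα rβ) (γα.prod γβ)) from rfl,
      lintegral_symN, lintegral_map vee_meas (couple_meas rα rβ)]
    exact lintegral_congr fun p => vee_couple hd η hη rα rβ hrα hrβ p
  exact ⟨part1, iInf_congr fun q => part1 q.1.1 q.1.2 q.2.1 q.2.2.1⟩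
end
end

section
/- Let d, Nα, Nβ ≥ 1 and let ρα, ρβ be compactly supported Borel probability measures on ℝ^d. Set mα := ∫ x¹ dρα(x) and mβ := ∫ y¹ dρβ(y). Then there exist constants C ≥ 0 and η₀ > 0 such that for every η ∈ (0, η₀), every γα ∈ Π_{Nα}(ρα) and every γβ ∈ Π_{Nβ}(ρβ), one has | ∫ Σ_{i=1}^{Nα} Σ_{j=1}^{Nβ} η/√(1 − 2η(x_i¹ − y_j¹) + η²|x_i − y_j|²) d(γα ⊗ γβ) − NαNβ·η − NαNβ(mα − mβ)·η² − (1/2)η³ ∫ Σ_{i=1}^{Nα} Σ_{j=1}^{Nβ} (3(x_i¹ − y_j¹)² − |x_i − y_j|²) d(γα ⊗ γβ) | ≤ C η⁴. -/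
open MeasureTheory

noncomputable section

set_option maxHeartbeats 1000000

lemma taylor_invsqrt' {t : ℝ} (ht : |t| ≤ 1/2) :
    |1 / Real.sqrt (1 - t) - (1 + t/2 + 3*t^2/8)| ≤ |t|^3 := by
  obtain ⟨htl, htr⟩ := abs_le.mp ht
  set s := Real.sqrt (1 - t) with hsdef
  have hs2 : s^2 = 1 - t := Real.sq_sqrt (by linarith)
  have hs0 : 0 ≤ s := Real.sqrt_nonneg _
  have hslb : (7:ℝ)/10 ≤ s := by nlinarith
  have hsub : s ≤ 13/10 := by nlinarith
  have hsne : s ≠ 0 := by positivity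
  have hid : 1 / s - (1 + t/2 + 3*t^2/8)
      = t^3 * ((3*s^2 + 9*s + 8) / (8*s*(1+s)^3)) := by
    have ht' : t = 1 - s^2 := by linarith
    rw [ht']
    field_simp
    ring
  rw [hid, abs_mul, abs_pow]
  have hr0 : 0 ≤ (3*s^2 + 9*s + 8) / (8*s*(1+s)^3) := by positivity
  have hr1 : (3*s^2 + 9*s + 8) / (8*s*(1+s)^3) ≤ 1 := by
    rw [div_le_one (by positivity)]
    nlinarith
  calc |t|^3 * |(3*s^2+9*s+8)/(8*s*(1+s)^3)|
      ≤ |t|^3 * 1 := by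
        rw [abs_of_nonneg hr0]
        exact mul_le_mul_of_nonneg_left hr1 (by positivity)
    _ = |t|^3 := mul_one _

lemma taylor_pointwise' {M η a b : ℝ} (hM : 0 ≤ M) (ha : |a| ≤ M) (hb : |b| ≤ M)
    (hη0 : 0 < η) (hη1 : η ≤ 1) (hη2 : η * (M+1)^2 ≤ 1/4) :
    |η / Real.sqrt (1 - 2*η*a + η^2*b^2) - (η + a*η^2 + (3*a^2 - b^2)/2 * η^3)|
      ≤ 3*(M+1)^6 * η^4 := by
  obtain ⟨ha1, ha2⟩ := abs_le.mp ha
  obtain ⟨hb1, hb2⟩ := abs_le.mp hb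
  have hb2sq : b^2 ≤ M^2 := by nlinarith
  set t := 2*η*a - η^2*b^2 with htdef
  have ht : |t| ≤ η * (M+1)^2 := by
    rw [abs_le]
    refine ⟨by nlinarith [sq_nonneg b, sq_nonneg η], by nlinarith [sq_nonneg b, sq_nonneg η]⟩
  have ht12 : |t| ≤ 1/2 := le_trans ht (by linarith)
  have key := taylor_invsqrt' ht12
  have harg : 1 - 2*η*a + η^2*b^2 = 1 - t := by rw [htdef]; ring
  rw [harg]
  have hsplit : η / Real.sqrt (1 - t) - (η + a*η^2 + (3*a^2 - b^2)/2 * η^3)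
      = η * (1 / Real.sqrt (1 - t) - (1 + t/2 + 3*t^2/8))
        + (η * (1 + t/2 + 3*t^2/8) - (η + a*η^2 + (3*a^2 - b^2)/2 * η^3)) := by
    ring
  rw [hsplit]
  have h1 : |η * (1 / Real.sqrt (1 - t) - (1 + t/2 + 3*t^2/8))| ≤ (M+1)^6 * η^4 := by
    rw [abs_mul, abs_of_pos hη0]
    calc η * |1 / Real.sqrt (1 - t) - (1 + t/2 + 3*t^2/8)| ≤ η * |t|^3 :=
          mul_le_mul_of_nonneg_left key (le_of_lt hη0)
      _ ≤ η * (η * (M+1)^2)^3 :=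
          mul_le_mul_of_nonneg_left (pow_le_pow_left₀ (abs_nonneg t) ht 3) (le_of_lt hη0)
      _ = (M+1)^6 * η^4 := by ring
  have hexp : η * (1 + t/2 + 3*t^2/8) - (η + a*η^2 + (3*a^2 - b^2)/2 * η^3)
      = η^4 * (-(3/2)*(a*b^2) + (3/8)*(η*b^4)) := by
    rw [htdef]; ring
  have hab : |a*b^2| ≤ M^3 := by
    rw [abs_mul, abs_of_nonneg (sq_nonneg b)]
    calc |a| * b^2 ≤ M * M^2 := mul_le_mul ha hb2sq (sq_nonneg b) hM
      _ = M^3 := by ring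
  have hb4 : |η*b^4| ≤ M^4 := by
    rw [abs_mul, abs_of_pos hη0]
    have h4 : |b^4| = b^4 := abs_of_nonneg (by positivity)
    have hbb : b^4 ≤ M^4 := by nlinarith [sq_nonneg b, sq_nonneg (b^2)]
    rw [h4]
    have hb40 : 0 ≤ b^4 := by positivity
    calc η * b^4 ≤ 1 * b^4 := mul_le_mul_of_nonneg_right hη1 hb40
      _ = b^4 := one_mul _
      _ ≤ M^4 := hbb
  have hin : |(-(3/2)*(a*b^2) + (3/8)*(η*b^4))| ≤ (3/2)*M^3 + (3/8)*M^4 := by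
    calc |(-(3/2)*(a*b^2) + (3/8)*(η*b^4))|
        ≤ |(-(3/2)*(a*b^2))| + |(3/8)*(η*b^4)| := abs_add_le _ _
      _ ≤ (3/2)*M^3 + (3/8)*M^4 := by
          have hx : |(-(3/2))*(a*b^2)| = 3/2 * |a*b^2| := by rw [abs_mul]; norm_num
          have hy : |((3:ℝ)/8)*(η*b^4)| = 3/8 * |η*b^4| := by rw [abs_mul]; norm_num
          rw [hx, hy]
          have := mul_le_mul_of_nonneg_left hab (by norm_num : (0:ℝ) ≤ 3/2)
          have := mul_le_mul_of_nonneg_left hb4 (by norm_num : (0:ℝ) ≤ 3/8)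
          linarith
  have hM3 : M^3 ≤ (M+1)^6 := by
    calc M^3 ≤ (M+1)^3 := pow_le_pow_left₀ hM (by linarith) 3
      _ ≤ (M+1)^6 := pow_le_pow_right₀ (by linarith) (by norm_num)
  have hM4 : M^4 ≤ (M+1)^6 := by
    calc M^4 ≤ (M+1)^4 := pow_le_pow_left₀ hM (by linarith) 4
      _ ≤ (M+1)^6 := pow_le_pow_right₀ (by linarith) (by norm_num)
  have h2 : |η * (1 + t/2 + 3*t^2/8) - (η + a*η^2 + (3*a^2 - b^2)/2 * η^3)|
      ≤ 2*(M+1)^6 * η^4 := by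
    rw [hexp, abs_mul, abs_of_pos (by positivity : (0:ℝ) < η^4)]
    calc η^4 * |(-(3/2)*(a*b^2) + (3/8)*(η*b^4))|
        ≤ η^4 * ((3/2)*M^3 + (3/8)*M^4) :=
          mul_le_mul_of_nonneg_left hin (by positivity)
      _ ≤ η^4 * (2*(M+1)^6) := by
          have hM6 : (0:ℝ) ≤ (M+1)^6 := by positivity
          have : (3/2)*M^3 + (3/8)*M^4 ≤ 2*(M+1)^6 := by linarith
          exact mul_le_mul_of_nonneg_left this (by positivity)
      _ = 2*(M+1)^6 * η^4 := by ring
  calc |η * (1 / Real.sqrt (1 - t) - (1 + t/2 + 3*t^2/8))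
        + (η * (1 + t/2 + 3*t^2/8) - (η + a*η^2 + (3*a^2 - b^2)/2 * η^3))|
      ≤ (M+1)^6 * η^4 + 2*(M+1)^6 * η^4 := le_trans (abs_add_le _ _) (add_le_add h1 h2)
    _ = 3*(M+1)^6 * η^4 := by ring

lemma coord_abs_le_norm' {d : ℕ} (x : EuclideanSpace ℝ (Fin d)) (k : Fin d) : |x k| ≤ ‖x‖ := by
  rw [EuclideanSpace.norm_eq]
  apply Real.le_sqrt_of_sq_le
  have : |x k|^2 = ‖x k‖^2 := by rw [Real.norm_eq_abs]
  calc |x k|^2 = ‖x k‖^2 := this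
    _ ≤ ∑ i, ‖x i‖^2 := Finset.single_le_sum (f := fun i => ‖x i‖^2)
        (fun i _ => by positivity) (Finset.mem_univ k)

theorem stmt_4 {d Nα Nβ : ℕ} (hd : 0 < d) (hNα : 0 < Nα) (hNβ : 0 < Nβ)
    (ρα ρβ : Measure (EuclideanSpace ℝ (Fin d)))
    [IsProbabilityMeasure ρα] [IsProbabilityMeasure ρβ]
    (hKα : ∃ K : Set (EuclideanSpace ℝ (Fin d)), IsCompact K ∧ ρα Kᶜ = 0)
    (hKβ : ∃ K : Set (EuclideanSpace ℝ (Fin d)), IsCompact K ∧ ρβ Kᶜ = 0) :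
    ∃ C : ℝ, 0 ≤ C ∧ ∃ η₀ : ℝ, 0 < η₀ ∧
      ∀ η ∈ Set.Ioo (0 : ℝ) η₀,
        ∀ (γα : Measure (Fin Nα → EuclideanSpace ℝ (Fin d)))
          (γβ : Measure (Fin Nβ → EuclideanSpace ℝ (Fin d))),
          IsProbabilityMeasure γα → IsProbabilityMeasure γβ →
          (∀ i : Fin Nα, Measure.map (fun z => z i) γα = ρα) →
          (∀ j : Fin Nβ, Measure.map (fun z => z j) γβ = ρβ) →
          |(∫ q, (∑ i : Fin Nα, ∑ j : Fin Nβ,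
                η / Real.sqrt (1 - 2 * η * (q.1 i ⟨0, hd⟩ - q.2 j ⟨0, hd⟩) +
                  η ^ 2 * ‖q.1 i - q.2 j‖ ^ 2)) ∂(γα.prod γβ)) -
              (Nα : ℝ) * (Nβ : ℝ) * η -
              (Nα : ℝ) * (Nβ : ℝ) *
                ((∫ x, x ⟨0, hd⟩ ∂ρα) - ∫ y, y ⟨0, hd⟩ ∂ρβ) * η ^ 2 -
              (1 / 2) * η ^ 3 *
                ∫ q, (∑ i : Fin Nα, ∑ j : Fin Nβ,
                  (3 * (q.1 i ⟨0, hd⟩ - q.2 j ⟨0, hd⟩) ^ 2 - ‖q.1 i - q.2 j‖ ^ 2))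
                  ∂(γα.prod γβ)| ≤ C * η ^ 4 := by
  classical
  obtain ⟨Kα, hKαc, hKα0⟩ := hKα
  obtain ⟨Kβ, hKβc, hKβ0⟩ := hKβ
  obtain ⟨Rα, hRα⟩ := hKαc.isBounded.subset_closedBall 0
  obtain ⟨Rβ, hRβ⟩ := hKβc.isBounded.subset_closedBall 0
  set R : ℝ := max 1 (max Rα Rβ) with hRdef
  have hR1 : (1:ℝ) ≤ R := le_max_left _ _
  have hR0 : (0:ℝ) ≤ R := by linarith
  set M : ℝ := 2*R with hMdef
  have hM0 : (0:ℝ) ≤ M := by positivity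
  refine ⟨(Nα:ℝ)*(Nβ:ℝ) * (3*(M+1)^6), by positivity,
    min 1 (1/(8*(M+1)^2)), lt_min one_pos (by positivity), ?_⟩
  rintro η ⟨hη0, hηlt⟩ γα γβ hγα hγβ hmapα hmapβ
  haveI := hγα; haveI := hγβ
  have hη1 : η ≤ 1 := le_of_lt (lt_of_lt_of_le hηlt (min_le_left _ _))
  have hη2 : η * (M+1)^2 ≤ 1/4 := by
    have h8 : η < 1/(8*(M+1)^2) := lt_of_lt_of_le hηlt (min_le_right _ _)
    have hp : (0:ℝ) < 8*(M+1)^2 := by positivity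
    rw [lt_div_iff₀ hp] at h8
    nlinarith
  set γ := γα.prod γβ with hγdef
  -- a.e. support bounds
  have hαae : ∀ᵐ x ∂ρα, ‖x‖ ≤ R := by
    rw [ae_iff]
    refine measure_mono_null ?_ hKα0
    intro x hx hmem
    simp only [Set.mem_setOf_eq, not_le] at hx
    have h1 := hRα hmem
    rw [Metric.mem_closedBall, dist_zero_right] at h1
    have h2 : Rα ≤ R := le_trans (le_max_left _ _) (le_max_right _ _)
    linarith
  have hβae : ∀ᵐ y ∂ρβ, ‖y‖ ≤ R := by
    rw [ae_iff]
    refine measure_mono_null ?_ hKβ0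
    intro y hy hmem
    simp only [Set.mem_setOf_eq, not_le] at hy
    have h1 := hRβ hmem
    rw [Metric.mem_closedBall, dist_zero_right] at h1
    have h2 : Rβ ≤ R := le_trans (le_max_right _ _) (le_max_right _ _)
    linarith
  have hγαae : ∀ᵐ z ∂γα, ∀ i, ‖z i‖ ≤ R := by
    rw [ae_all_iff]
    intro i
    exact ae_of_ae_map (measurable_pi_apply i).aemeasurable (by rw [hmapα i]; exact hαae)
  have hγβae : ∀ᵐ w ∂γβ, ∀ j, ‖w j‖ ≤ R := by
    rw [ae_all_iff]
    intro j
    exact ae_of_ae_map (measurable_pi_apply j).aemeasurable (by rw [hmapβ j]; exact hβae)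
  have hmapfst : Measure.map Prod.fst γ = γα := by
    rw [hγdef, Measure.map_fst_prod, measure_univ, one_smul]
  have hmapsnd : Measure.map Prod.snd γ = γβ := by
    rw [hγdef, Measure.map_snd_prod, measure_univ, one_smul]
  have hae : ∀ᵐ q ∂γ, (∀ i, ‖q.1 i‖ ≤ R) ∧ (∀ j, ‖q.2 j‖ ≤ R) := by
    refine Filter.Eventually.and ?_ ?_
    · exact ae_of_ae_map measurable_fst.aemeasurable (by rw [hmapfst]; exact hγαae)
    · exact ae_of_ae_map measurable_snd.aemeasurable (by rw [hmapsnd]; exact hγβae)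
  -- measurability
  have hmc : Measurable (fun x : EuclideanSpace ℝ (Fin d) => x ⟨0,hd⟩) :=
    (measurable_pi_apply _).comp (PiLp.continuous_ofLp 2 _).measurable
  have hma : ∀ (i : Fin Nα) (j : Fin Nβ),
      Measurable (fun q : (Fin Nα → EuclideanSpace ℝ (Fin d)) × (Fin Nβ → EuclideanSpace ℝ (Fin d)) =>
        q.1 i ⟨0,hd⟩ - q.2 j ⟨0,hd⟩) := fun i j =>
    (hmc.comp ((measurable_pi_apply i).comp measurable_fst)).sub
      (hmc.comp ((measurable_pi_apply j).comp measurable_snd))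
  have hmb : ∀ (i : Fin Nα) (j : Fin Nβ),
      Measurable (fun q : (Fin Nα → EuclideanSpace ℝ (Fin d)) × (Fin Nβ → EuclideanSpace ℝ (Fin d)) =>
        ‖q.1 i - q.2 j‖) := fun i j =>
    (((measurable_pi_apply i).comp measurable_fst).sub
      ((measurable_pi_apply j).comp measurable_snd)).norm
  -- abbreviations
  set F : (Fin Nα → EuclideanSpace ℝ (Fin d)) × (Fin Nβ → EuclideanSpace ℝ (Fin d)) → ℝ :=
    fun q => ∑ i : Fin Nα, ∑ j : Fin Nβ,
      η / Real.sqrt (1 - 2 * η * (q.1 i ⟨0, hd⟩ - q.2 j ⟨0, hd⟩) +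
        η ^ 2 * ‖q.1 i - q.2 j‖ ^ 2) with hFdef
  set G : (Fin Nα → EuclideanSpace ℝ (Fin d)) × (Fin Nβ → EuclideanSpace ℝ (Fin d)) → ℝ :=
    fun q => ∑ i : Fin Nα, ∑ j : Fin Nβ,
      (3 * (q.1 i ⟨0, hd⟩ - q.2 j ⟨0, hd⟩) ^ 2 - ‖q.1 i - q.2 j‖ ^ 2) with hGdef
  set P : (Fin Nα → EuclideanSpace ℝ (Fin d)) × (Fin Nβ → EuclideanSpace ℝ (Fin d)) → ℝ :=
    fun q => ∑ i : Fin Nα, ∑ j : Fin Nβ,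
      (η + (q.1 i ⟨0, hd⟩ - q.2 j ⟨0, hd⟩) * η ^ 2 +
        (3 * (q.1 i ⟨0, hd⟩ - q.2 j ⟨0, hd⟩) ^ 2 - ‖q.1 i - q.2 j‖ ^ 2) / 2 * η ^ 3) with hPdef
  have hmF : Measurable F := by
    apply Finset.measurable_sum
    intro i _
    apply Finset.measurable_sum
    intro j _
    exact measurable_const.div (Real.continuous_sqrt.measurable.comp
      (((measurable_const.sub ((hma i j).const_mul (2*η)))).add
        (((hmb i j).pow_const 2).const_mul (η^2))))
  have hmG : Measurable G := by
    apply Finset.measurable_sum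
    intro i _
    apply Finset.measurable_sum
    intro j _
    exact (((hma i j).pow_const 2).const_mul 3).sub ((hmb i j).pow_const 2)
  have hmP : Measurable P := by
    apply Finset.measurable_sum
    intro i _
    apply Finset.measurable_sum
    intro j _
    exact (measurable_const.add ((hma i j).mul_const (η^2))).add
      (((((hma i j).pow_const 2).const_mul 3).sub ((hmb i j).pow_const 2)).div_const 2 |>.mul_const (η^3))
  -- generic integrability
  have hint : ∀ (f : (Fin Nα → EuclideanSpace ℝ (Fin d)) × (Fin Nβ → EuclideanSpace ℝ (Fin d)) → ℝ)
      (c : ℝ), Measurable f → (∀ᵐ q ∂γ, |f q| ≤ c) → Integrable f γ := fun f c hf hb =>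
    Integrable.mono' (integrable_const c) hf.aestronglyMeasurable
      (by simpa [Real.norm_eq_abs] using hb)
  -- sum bound helper
  have hsum_bound : ∀ (f : Fin Nα → Fin Nβ → ℝ) (c : ℝ), (∀ i j, |f i j| ≤ c) →
      |∑ i : Fin Nα, ∑ j : Fin Nβ, f i j| ≤ (Nα:ℝ)*(Nβ:ℝ) * c := by
    intro f c hf
    calc |∑ i : Fin Nα, ∑ j : Fin Nβ, f i j| ≤ ∑ i : Fin Nα, |∑ j : Fin Nβ, f i j| :=
          Finset.abs_sum_le_sum_abs _ _
      _ ≤ ∑ _i : Fin Nα, ∑ _j : Fin Nβ, c := by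
          refine Finset.sum_le_sum (fun i _ => ?_)
          refine le_trans (Finset.abs_sum_le_sum_abs _ _) (Finset.sum_le_sum (fun j _ => hf i j))
      _ = (Nα:ℝ)*(Nβ:ℝ) * c := by
          simp [Finset.sum_const, Finset.card_univ, mul_assoc]
  -- pointwise bounds within the good set
  have haeb : ∀ᵐ q ∂γ, (∀ (i : Fin Nα) (j : Fin Nβ), |q.1 i ⟨0,hd⟩ - q.2 j ⟨0,hd⟩| ≤ M) ∧
      (∀ (i : Fin Nα) (j : Fin Nβ), |‖q.1 i - q.2 j‖| ≤ M) := by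
    filter_upwards [hae] with q hq
    obtain ⟨hq1, hq2⟩ := hq
    constructor
    · intro i j
      have hx := abs_le.mp ((coord_abs_le_norm' (q.1 i) ⟨0,hd⟩).trans (hq1 i))
      have hy := abs_le.mp ((coord_abs_le_norm' (q.2 j) ⟨0,hd⟩).trans (hq2 j))
      rw [abs_le, hMdef]
      constructor <;> linarith [hx.1, hx.2, hy.1, hy.2]
    · intro i j
      rw [abs_of_nonneg (norm_nonneg _)]
      calc ‖q.1 i - q.2 j‖ ≤ ‖q.1 i‖ + ‖q.2 j‖ := norm_sub_le _ _
        _ ≤ R + R := add_le_add (hq1 i) (hq2 j)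
        _ = M := by rw [hMdef]; ring
  -- integrable pieces
  have hintfst : ∀ i : Fin Nα, Integrable (fun q : (Fin Nα → EuclideanSpace ℝ (Fin d)) × (Fin Nβ → EuclideanSpace ℝ (Fin d)) => q.1 i ⟨0,hd⟩) γ := by
    intro i
    refine hint _ R (hmc.comp ((measurable_pi_apply i).comp measurable_fst)) ?_
    filter_upwards [hae] with q hq
    exact (coord_abs_le_norm' _ _).trans (hq.1 i)
  have hintsnd : ∀ j : Fin Nβ, Integrable (fun q : (Fin Nα → EuclideanSpace ℝ (Fin d)) × (Fin Nβ → EuclideanSpace ℝ (Fin d)) => q.2 j ⟨0,hd⟩) γ := by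
    intro j
    refine hint _ R (hmc.comp ((measurable_pi_apply j).comp measurable_snd)) ?_
    filter_upwards [hae] with q hq
    exact (coord_abs_le_norm' _ _).trans (hq.2 j)
  have hinta : ∀ (i : Fin Nα) (j : Fin Nβ),
      Integrable (fun q : (Fin Nα → EuclideanSpace ℝ (Fin d)) × (Fin Nβ → EuclideanSpace ℝ (Fin d)) =>
        q.1 i ⟨0,hd⟩ - q.2 j ⟨0,hd⟩) γ := fun i j => (hintfst i).sub (hintsnd j)
  have hintA : Integrable (fun q : (Fin Nα → EuclideanSpace ℝ (Fin d)) × (Fin Nβ → EuclideanSpace ℝ (Fin d)) =>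
      ∑ i : Fin Nα, ∑ j : Fin Nβ, (q.1 i ⟨0,hd⟩ - q.2 j ⟨0,hd⟩)) γ :=
    integrable_finset_sum _ (fun i _ => integrable_finset_sum _ (fun j _ => hinta i j))
  have hintG : Integrable G γ := by
    refine hint G ((Nα:ℝ)*(Nβ:ℝ) * (4*M^2)) hmG ?_
    filter_upwards [haeb] with q hq
    refine hsum_bound _ _ (fun i j => ?_)
    obtain ⟨ha1, ha2⟩ := abs_le.mp (hq.1 i j)
    obtain ⟨hb1, hb2⟩ := abs_le.mp (hq.2 i j)
    rw [abs_le]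
    constructor <;> nlinarith [sq_nonneg (q.1 i ⟨0,hd⟩ - q.2 j ⟨0,hd⟩), norm_nonneg (q.1 i - q.2 j)]
  have hintP : Integrable P γ := by
    refine hint P ((Nα:ℝ)*(Nβ:ℝ) * (1 + M + 2*M^2 + 2)) hmP ?_
    filter_upwards [haeb] with q hq
    refine hsum_bound _ _ (fun i j => ?_)
    obtain ⟨ha1, ha2⟩ := abs_le.mp (hq.1 i j)
    obtain ⟨hb1, hb2⟩ := abs_le.mp (hq.2 i j)
    have ha2sq : (q.1 i ⟨0,hd⟩ - q.2 j ⟨0,hd⟩)^2 ≤ M^2 := by nlinarith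
    have hb2sq : ‖q.1 i - q.2 j‖^2 ≤ M^2 := by nlinarith
    have hη2' : η^2 ≤ 1 := by nlinarith
    have hη3' : η^3 ≤ 1 := by nlinarith [sq_nonneg η, mul_pos hη0 hη0]
    have k1 : |(q.1 i ⟨0,hd⟩ - q.2 j ⟨0,hd⟩) * η^2| ≤ M := by
      rw [abs_mul, abs_of_nonneg (sq_nonneg η)]
      calc |q.1 i ⟨0,hd⟩ - q.2 j ⟨0,hd⟩| * η^2 ≤ M * 1 :=
            mul_le_mul (hq.1 i j) hη2' (sq_nonneg η) hM0
        _ = M := mul_one M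
    have k2 : |(3 * (q.1 i ⟨0,hd⟩ - q.2 j ⟨0,hd⟩)^2 - ‖q.1 i - q.2 j‖^2) / 2 * η^3| ≤ 2*M^2 := by
      rw [abs_mul, abs_of_nonneg (by positivity : (0:ℝ) ≤ η^3)]
      have hc : |(3 * (q.1 i ⟨0,hd⟩ - q.2 j ⟨0,hd⟩)^2 - ‖q.1 i - q.2 j‖^2) / 2| ≤ 2*M^2 := by
        rw [abs_le]
        constructor <;> nlinarith [sq_nonneg (q.1 i ⟨0,hd⟩ - q.2 j ⟨0,hd⟩), sq_nonneg (‖q.1 i - q.2 j‖)]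
      calc |(3 * (q.1 i ⟨0,hd⟩ - q.2 j ⟨0,hd⟩)^2 - ‖q.1 i - q.2 j‖^2) / 2| * η^3
          ≤ (2*M^2) * 1 := mul_le_mul hc hη3' (by positivity) (by positivity)
        _ = 2*M^2 := mul_one _
    calc |η + (q.1 i ⟨0,hd⟩ - q.2 j ⟨0,hd⟩) * η^2 +
          (3 * (q.1 i ⟨0,hd⟩ - q.2 j ⟨0,hd⟩)^2 - ‖q.1 i - q.2 j‖^2) / 2 * η^3|
        ≤ |η + (q.1 i ⟨0,hd⟩ - q.2 j ⟨0,hd⟩) * η^2| +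
          |(3 * (q.1 i ⟨0,hd⟩ - q.2 j ⟨0,hd⟩)^2 - ‖q.1 i - q.2 j‖^2) / 2 * η^3| := abs_add_le _ _
      _ ≤ (|η| + |(q.1 i ⟨0,hd⟩ - q.2 j ⟨0,hd⟩) * η^2|) +
          |(3 * (q.1 i ⟨0,hd⟩ - q.2 j ⟨0,hd⟩)^2 - ‖q.1 i - q.2 j‖^2) / 2 * η^3| :=
            add_le_add_left (abs_add_le _ _) _
      _ ≤ (1 + M) + 2*M^2 := by
          rw [abs_of_pos hη0]
          exact add_le_add (add_le_add hη1 k1) k2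
      _ ≤ 1 + M + 2*M^2 + 2 := by linarith
  have hFPae : ∀ᵐ q ∂γ, |F q - P q| ≤ (Nα:ℝ)*(Nβ:ℝ) * (3*(M+1)^6 * η^4) := by
    filter_upwards [haeb] with q hq
    have hsplit : F q - P q = ∑ i : Fin Nα, ∑ j : Fin Nβ,
        (η / Real.sqrt (1 - 2 * η * (q.1 i ⟨0, hd⟩ - q.2 j ⟨0, hd⟩) +
            η ^ 2 * ‖q.1 i - q.2 j‖ ^ 2) -
          (η + (q.1 i ⟨0, hd⟩ - q.2 j ⟨0, hd⟩) * η ^ 2 +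
            (3 * (q.1 i ⟨0, hd⟩ - q.2 j ⟨0, hd⟩) ^ 2 - ‖q.1 i - q.2 j‖ ^ 2) / 2 * η ^ 3)) := by
      rw [hFdef, hPdef]
      simp only [← Finset.sum_sub_distrib]
    rw [hsplit]
    refine hsum_bound _ _ (fun i j => ?_)
    have := taylor_pointwise' hM0 (hq.1 i j) (hq.2 i j) hη0 hη1 hη2
    convert this using 3 <;> ring
  have hintFP : Integrable (fun q => F q - P q) γ :=
    hint _ ((Nα:ℝ)*(Nβ:ℝ) * (3*(M+1)^6 * η^4)) (hmF.sub hmP) hFPae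
  -- splitting P
  have hsplitP : ∀ q, P q = (Nα:ℝ)*(Nβ:ℝ)*η
      + η^2 * (∑ i : Fin Nα, ∑ j : Fin Nβ, (q.1 i ⟨0,hd⟩ - q.2 j ⟨0,hd⟩))
      + (1/2)*η^3 * G q := by
    intro q
    rw [hPdef, hGdef]
    have h1 : (Nα:ℝ)*(Nβ:ℝ)*η = ∑ _i : Fin Nα, ∑ _j : Fin Nβ, η := by
      simp [Finset.sum_const, Finset.card_univ, mul_assoc]
    rw [h1]
    simp only [Finset.mul_sum]
    rw [← Finset.sum_add_distrib, ← Finset.sum_add_distrib]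
    refine Finset.sum_congr rfl (fun i _ => ?_)
    rw [← Finset.sum_add_distrib, ← Finset.sum_add_distrib]
    refine Finset.sum_congr rfl (fun j _ => ?_)
    ring
  have hPint : ∫ q, P q ∂γ = (Nα:ℝ)*(Nβ:ℝ)*η
      + η^2 * (∫ q, (∑ i : Fin Nα, ∑ j : Fin Nβ, (q.1 i ⟨0,hd⟩ - q.2 j ⟨0,hd⟩)) ∂γ)
      + (1/2)*η^3 * ∫ q, G q ∂γ := by
    have e : ∫ q, P q ∂γ = ∫ q, ((Nα:ℝ)*(Nβ:ℝ)*η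
        + η^2 * (∑ i : Fin Nα, ∑ j : Fin Nβ, (q.1 i ⟨0,hd⟩ - q.2 j ⟨0,hd⟩))
        + (1/2)*η^3 * G q) ∂γ := by
      exact integral_congr_ae (Filter.Eventually.of_forall hsplitP)
    have hi1 : Integrable (fun q : (Fin Nα → EuclideanSpace ℝ (Fin d)) × (Fin Nβ → EuclideanSpace ℝ (Fin d)) =>
        (Nα:ℝ)*(Nβ:ℝ)*η + η^2 * (∑ i : Fin Nα, ∑ j : Fin Nβ, (q.1 i ⟨0,hd⟩ - q.2 j ⟨0,hd⟩))) γ :=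
      (integrable_const _).add (hintA.const_mul _)
    have hi2 : Integrable (fun q : (Fin Nα → EuclideanSpace ℝ (Fin d)) × (Fin Nβ → EuclideanSpace ℝ (Fin d)) =>
        (1:ℝ)/2*η^3 * G q) γ := hintG.const_mul _
    have hi3 : Integrable (fun _q : (Fin Nα → EuclideanSpace ℝ (Fin d)) × (Fin Nβ → EuclideanSpace ℝ (Fin d)) =>
        (Nα:ℝ)*(Nβ:ℝ)*η) γ := integrable_const _
    have hi4 : Integrable (fun q : (Fin Nα → EuclideanSpace ℝ (Fin d)) × (Fin Nβ → EuclideanSpace ℝ (Fin d)) =>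
        η^2 * (∑ i : Fin Nα, ∑ j : Fin Nβ, (q.1 i ⟨0,hd⟩ - q.2 j ⟨0,hd⟩))) γ := hintA.const_mul _
    rw [e, integral_add hi1 hi2, integral_add hi3 hi4, integral_const,
      integral_const_mul, integral_const_mul]
    simp [measure_univ]
  -- marginal integrals
  have hfst : ∀ i : Fin Nα, ∫ q, q.1 i ⟨0,hd⟩ ∂γ = ∫ x, x ⟨0,hd⟩ ∂ρα := by
    intro i
    have hm1 : Measurable (fun z : Fin Nα → EuclideanSpace ℝ (Fin d) => z i ⟨0,hd⟩) :=
      hmc.comp (measurable_pi_apply i)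
    have e1 : ∫ q, q.1 i ⟨0,hd⟩ ∂γ = ∫ z, z i ⟨0,hd⟩ ∂γα := by
      conv_rhs => rw [← hmapfst]
      exact (integral_map measurable_fst.aemeasurable
        (by rw [hmapfst]; exact hm1.aestronglyMeasurable)).symm
    have e2 : ∫ z, z i ⟨0,hd⟩ ∂γα = ∫ x, x ⟨0,hd⟩ ∂ρα := by
      conv_rhs => rw [← hmapα i]
      exact (integral_map (measurable_pi_apply i).aemeasurable
        (by rw [hmapα i]; exact hmc.aestronglyMeasurable)).symm
    rw [e1, e2]
  have hsnd : ∀ j : Fin Nβ, ∫ q, q.2 j ⟨0,hd⟩ ∂γ = ∫ y, y ⟨0,hd⟩ ∂ρβ := by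
    intro j
    have hm1 : Measurable (fun w : Fin Nβ → EuclideanSpace ℝ (Fin d) => w j ⟨0,hd⟩) :=
      hmc.comp (measurable_pi_apply j)
    have e1 : ∫ q, q.2 j ⟨0,hd⟩ ∂γ = ∫ w, w j ⟨0,hd⟩ ∂γβ := by
      conv_rhs => rw [← hmapsnd]
      exact (integral_map measurable_snd.aemeasurable
        (by rw [hmapsnd]; exact hm1.aestronglyMeasurable)).symm
    have e2 : ∫ w, w j ⟨0,hd⟩ ∂γβ = ∫ y, y ⟨0,hd⟩ ∂ρβ := by
      conv_rhs => rw [← hmapβ j]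
      exact (integral_map (measurable_pi_apply j).aemeasurable
        (by rw [hmapβ j]; exact hmc.aestronglyMeasurable)).symm
    rw [e1, e2]
  have hAint : ∫ q, (∑ i : Fin Nα, ∑ j : Fin Nβ, (q.1 i ⟨0,hd⟩ - q.2 j ⟨0,hd⟩)) ∂γ
      = (Nα:ℝ)*(Nβ:ℝ)*((∫ x, x ⟨0,hd⟩ ∂ρα) - ∫ y, y ⟨0,hd⟩ ∂ρβ) := by
    rw [integral_finset_sum _ (fun i _ => integrable_finset_sum _ (fun j _ => hinta i j))]
    have e1 : ∀ i : Fin Nα, ∫ q, (∑ j : Fin Nβ, (q.1 i ⟨0,hd⟩ - q.2 j ⟨0,hd⟩)) ∂γ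
        = ∑ j : Fin Nβ, ∫ q, (q.1 i ⟨0,hd⟩ - q.2 j ⟨0,hd⟩) ∂γ := fun i =>
      integral_finset_sum _ (fun j _ => hinta i j)
    have e2 : ∀ (i : Fin Nα) (j : Fin Nβ), ∫ q, (q.1 i ⟨0,hd⟩ - q.2 j ⟨0,hd⟩) ∂γ
        = (∫ x, x ⟨0,hd⟩ ∂ρα) - ∫ y, y ⟨0,hd⟩ ∂ρβ := by
      intro i j
      rw [integral_sub (hintfst i) (hintsnd j), hfst i, hsnd j]
    simp only [e1, e2, Finset.sum_const, Finset.card_univ, Fintype.card_fin, nsmul_eq_mul]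
    ring
  -- final assembly
  have hFint : ∫ q, F q ∂γ = (∫ q, (F q - P q) ∂γ) + ∫ q, P q ∂γ := by
    rw [← integral_add hintFP hintP]
    simp
  rw [hFint, hPint, hAint]
  have hcollapse : ∫ q, (F q - P q) ∂γ
      + ((Nα:ℝ)*(Nβ:ℝ)*η + η^2 * ((Nα:ℝ)*(Nβ:ℝ)*((∫ x, x ⟨0,hd⟩ ∂ρα) - ∫ y, y ⟨0,hd⟩ ∂ρβ))
        + (1/2)*η^3 * ∫ q, G q ∂γ)
      - (Nα:ℝ)*(Nβ:ℝ)*η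
      - (Nα:ℝ)*(Nβ:ℝ)*((∫ x, x ⟨0,hd⟩ ∂ρα) - ∫ y, y ⟨0,hd⟩ ∂ρβ)*η^2
      - (1/2)*η^3 * ∫ q, G q ∂γ = ∫ q, (F q - P q) ∂γ := by ring
  rw [hcollapse]
  have hbnd : ‖∫ q, (F q - P q) ∂γ‖
      ≤ ∫ _q, ((Nα:ℝ)*(Nβ:ℝ) * (3*(M+1)^6 * η^4)) ∂γ :=
    norm_integral_le_of_norm_le (integrable_const _)
      (by simpa [Real.norm_eq_abs] using hFPae)
  rw [integral_const] at hbnd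
  simp only [measure_univ, probReal_univ, ENNReal.toReal_one, one_smul, Real.norm_eq_abs] at hbnd
  calc |∫ q, (F q - P q) ∂γ| ≤ (Nα:ℝ)*(Nβ:ℝ) * (3*(M+1)^6 * η^4) := hbnd
    _ = (Nα:ℝ)*(Nβ:ℝ) * (3*(M+1)^6) * η^4 := by ring
end
end
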